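/- Assume h satisfies the stability property and the pair (h,h°) satisfies the Combinatorial Duality Property. Then for every cube (ℓ,I) of R, the weight of the cube exceeds the weight of its base vertex exactly by the increment of h along its main diagonal: max{w(ℓ+E_{I'}) : I' ⊆ I} − w(ℓ) = h(ℓ+E_I) − h(ℓ). -/

import Mathlib

open Finset

/-- `cubeE I` is the lattice vector `E_I = ∑_{v ∈ I} E_v`. -/
def cubeE {s : ℕ} (I : Finset (Fin s)) : Fin s → ℤ := fun v => if v ∈ I then 1 else 0

lemma cubeE_empty {s : ℕ} : cubeE (∅ : Finset (Fin s)) = 0 := by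
  funext v; simp [cubeE]

lemma cubeE_nonneg {s : ℕ} (I : Finset (Fin s)) : 0 ≤ cubeE I := by
  intro v; simp only [cubeE]; split <;> norm_num

lemma cubeE_mono {s : ℕ} {J K : Finset (Fin s)} (hJK : J ⊆ K) : cubeE J ≤ cubeE K := by
  intro v
  by_cases hJ : v ∈ J
  · simp [cubeE, hJ, hJK hJ]
  · simp only [cubeE, if_neg hJ, Pi.le_def]
    split <;> norm_num

lemma cubeE_insert {s : ℕ} {J : Finset (Fin s)} {v : Fin s} (hv : v ∉ J) :
    cubeE (insert v J) = cubeE J + cubeE {v} := by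
  funext w
  simp only [cubeE, Pi.add_apply, Finset.mem_insert, Finset.mem_singleton]
  by_cases h1 : w = v
  · subst h1; simp [hv]
  · by_cases h2 : w ∈ J <;> simp [h1, h2]

lemma mono_chain {s : ℕ} (c : Fin s → ℤ) (h : (Fin s → ℤ) → ℤ)
    (h_mono : ∀ (ℓ : Fin s → ℤ) (v : Fin s), 0 ≤ ℓ → ℓ + cubeE {v} ≤ c →
      h ℓ ≤ h (ℓ + cubeE {v})) :
    ∀ (n : ℕ) (ℓ : Fin s → ℤ) (J K : Finset (Fin s)), (K \ J).card = n → J ⊆ K →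
      0 ≤ ℓ → ℓ + cubeE K ≤ c → h (ℓ + cubeE J) ≤ h (ℓ + cubeE K) := by
  intro n
  induction n with
  | zero =>
      intro ℓ J K hcard hJK hl hcK
      have hKJ : K ⊆ J := by
        have := Finset.card_eq_zero.mp hcard
        exact Finset.sdiff_eq_empty_iff_subset.mp this
      rw [Finset.Subset.antisymm hJK hKJ]
  | succ n ih =>
      intro ℓ J K hcard hJK hl hcK
      have hne : (K \ J).Nonempty := by
        rw [← Finset.card_pos, hcard]; omega
      obtain ⟨v, hv⟩ := hne
      have hvK : v ∈ K := (Finset.mem_sdiff.mp hv).1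
      have hvJ : v ∉ J := (Finset.mem_sdiff.mp hv).2
      have hsub : insert v J ⊆ K := Finset.insert_subset hvK hJK
      have hle : ℓ + cubeE (insert v J) ≤ c :=
        le_trans (add_le_add_right (cubeE_mono hsub) ℓ) hcK
      have heq : ℓ + cubeE J + cubeE {v} = ℓ + cubeE (insert v J) := by
        rw [cubeE_insert hvJ, add_assoc]
      have step : h (ℓ + cubeE J) ≤ h (ℓ + cubeE (insert v J)) := by
        have := h_mono (ℓ + cubeE J) v
          (le_trans hl (le_add_of_nonneg_right (cubeE_nonneg J)))
          (by rw [heq]; exact hle)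
        rwa [heq] at this
      have hcard' : (K \ insert v J).card = n := by
        rw [Finset.sdiff_insert, Finset.card_erase_of_mem hv, hcard]; omega
      exact le_trans step (ih ℓ (insert v J) K hcard' hsub hl hcK)

lemma exists_corner {s : ℕ} (c : Fin s → ℤ) (h h0 : (Fin s → ℤ) → ℤ)
    (h_stab : ∀ (ℓ ℓbar : Fin s → ℤ) (v : Fin s), 0 ≤ ℓ → ℓ + cubeE {v} ≤ c →
      0 ≤ ℓbar → ℓbar v = 0 → ℓ + ℓbar + cubeE {v} ≤ c →
      h ℓ = h (ℓ + cubeE {v}) → h (ℓ + ℓbar) = h (ℓ + ℓbar + cubeE {v}))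
    (h_cdp : ∀ (ℓ : Fin s → ℤ) (v : Fin s), 0 ≤ ℓ → ℓ + cubeE {v} ≤ c →
      h (ℓ + cubeE {v}) - h ℓ = 0 ∨ h0 (ℓ + cubeE {v}) - h0 ℓ = 0) :
    ∀ (n : ℕ) (ℓ : Fin s → ℤ) (I : Finset (Fin s)), I.card = n →
      0 ≤ ℓ → ℓ + cubeE I ≤ c →
      ∃ I', I' ⊆ I ∧ h (ℓ + cubeE I') = h (ℓ + cubeE I) ∧ h0 (ℓ + cubeE I') = h0 ℓ := by
  intro n
  induction n with
  | zero =>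
      intro ℓ I hcard hl hcI
      rw [Finset.card_eq_zero.mp hcard]
      exact ⟨∅, Finset.Subset.refl _, rfl, by rw [cubeE_empty, add_zero]⟩
  | succ n ih =>
      intro ℓ I hcard hl hcI
      have hne : I.Nonempty := by rw [← Finset.card_pos, hcard]; omega
      obtain ⟨v, hvI⟩ := hne
      set J := I.erase v with hJ
      have hvJ : v ∉ J := Finset.notMem_erase v I
      have hIJ : I = insert v J := (Finset.insert_erase hvI).symm
      have hcubeI : cubeE I = cubeE J + cubeE {v} := by
        rw [hIJ]; exact cubeE_insert hvJ
      have hJcard : J.card = n := by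
        rw [hJ, Finset.card_erase_of_mem hvI, hcard]; omega
      have hJsub : J ⊆ I := Finset.erase_subset v I
      have hvsub : {v} ⊆ I := Finset.singleton_subset_iff.mpr hvI
      have hlev : ℓ + cubeE {v} ≤ c :=
        le_trans (add_le_add_right (cubeE_mono hvsub) ℓ) hcI
      have hleJ : ℓ + cubeE J ≤ c :=
        le_trans (add_le_add_right (cubeE_mono hJsub) ℓ) hcI
      have heq2 : ℓ + cubeE J + cubeE {v} = ℓ + cubeE I := by
        rw [hcubeI, add_assoc]
      rcases h_cdp ℓ v hl hlev with hcase | hcase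
      · -- h (ℓ + E_v) = h ℓ
        have hhv : h ℓ = h (ℓ + cubeE {v}) := by linarith
        have hstep : h (ℓ + cubeE J) = h (ℓ + cubeE J + cubeE {v}) :=
          h_stab ℓ (cubeE J) v hl hlev (cubeE_nonneg J)
            (by simp [cubeE, hvJ]) (by rw [heq2]; exact hcI) hhv
        obtain ⟨I', hI'sub, hI'h, hI'h0⟩ := ih ℓ J hJcard hl hleJ
        exact ⟨I', le_trans hI'sub hJsub, by rw [hI'h, hstep, heq2], hI'h0⟩
      · -- h0 (ℓ + E_v) = h0 ℓ
        have hh0v : h0 (ℓ + cubeE {v}) = h0 ℓ := by linarith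
        have hlv : 0 ≤ ℓ + cubeE {v} :=
          le_trans hl (le_add_of_nonneg_right (cubeE_nonneg _))
        have heq3 : ℓ + cubeE {v} + cubeE J = ℓ + cubeE I := by
          rw [hcubeI]; ring
        obtain ⟨I'', hI''sub, hI''h, hI''h0⟩ :=
          ih (ℓ + cubeE {v}) J hJcard hlv (by rw [heq3]; exact hcI)
        have hvI'' : v ∉ I'' := fun hx => hvJ (hI''sub hx)
        refine ⟨insert v I'', ?_, ?_, ?_⟩
        · rw [hIJ]; exact Finset.insert_subset_insert v hI''sub
        · rw [cubeE_insert hvI'']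
          have : ℓ + (cubeE I'' + cubeE {v}) = ℓ + cubeE {v} + cubeE I'' := by ring
          rw [this, hI''h, heq3]
        · rw [cubeE_insert hvI'']
          have : ℓ + (cubeE I'' + cubeE {v}) = ℓ + cubeE {v} + cubeE I'' := by ring
          rw [this, hI''h0, hh0v]


/-- if `h` satisfies the stability property and `(h, h°)` satisfies the
Combinatorial Duality Property, then for every cube `(ℓ, I)` of `R` one has
`max{w(ℓ+E_{I'}) : I' ⊆ I} − w(ℓ) = h(ℓ+E_I) − h(ℓ)`. -/
theorem statement2 {s : ℕ} (hs : 1 ≤ s) (c : Fin s → ℤ)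
    (hc : cubeE (Finset.univ : Finset (Fin s)) ≤ c)
    (h h0 : (Fin s → ℤ) → ℤ)
    (h_zero : h 0 = 0)
    (h_mono : ∀ (ℓ : Fin s → ℤ) (v : Fin s), 0 ≤ ℓ → ℓ + cubeE {v} ≤ c →
      h ℓ ≤ h (ℓ + cubeE {v}))
    (h0_anti : ∀ (ℓ : Fin s → ℤ) (v : Fin s), 0 ≤ ℓ → ℓ + cubeE {v} ≤ c →
      h0 (ℓ + cubeE {v}) ≤ h0 ℓ)
    (h_stab : ∀ (ℓ ℓbar : Fin s → ℤ) (v : Fin s), 0 ≤ ℓ → ℓ + cubeE {v} ≤ c →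
      0 ≤ ℓbar → ℓbar v = 0 → ℓ + ℓbar + cubeE {v} ≤ c →
      h ℓ = h (ℓ + cubeE {v}) → h (ℓ + ℓbar) = h (ℓ + ℓbar + cubeE {v}))
    (h_cdp : ∀ (ℓ : Fin s → ℤ) (v : Fin s), 0 ≤ ℓ → ℓ + cubeE {v} ≤ c →
      h (ℓ + cubeE {v}) - h ℓ = 0 ∨ h0 (ℓ + cubeE {v}) - h0 ℓ = 0)
    (ℓ : Fin s → ℤ) (I : Finset (Fin s)) (hℓ : 0 ≤ ℓ) (hℓI : ℓ + cubeE I ≤ c) :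
    I.powerset.sup' (Finset.powerset_nonempty I)
        (fun I' => h (ℓ + cubeE I') + h0 (ℓ + cubeE I') - h0 0)
      - (h ℓ + h0 ℓ - h0 0)
    = h (ℓ + cubeE I) - h ℓ := by
  have husub : ∀ I' : Finset (Fin s), I' ⊆ I → ℓ + cubeE I' ≤ c := fun I' hI' =>
    le_trans (add_le_add_right (cubeE_mono hI') ℓ) hℓI
  have hW : I.powerset.sup' (Finset.powerset_nonempty I)
      (fun I' => h (ℓ + cubeE I') + h0 (ℓ + cubeE I') - h0 0)
      = h (ℓ + cubeE I) + h0 ℓ - h0 0 := by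
    apply le_antisymm
    · apply Finset.sup'_le
      intro I' hI'
      have hI'I : I' ⊆ I := Finset.mem_powerset.mp hI'
      have h1 : h (ℓ + cubeE I') ≤ h (ℓ + cubeE I) :=
        mono_chain c h h_mono (I \ I').card ℓ I' I rfl hI'I hℓ hℓI
      have h2 : h0 (ℓ + cubeE I') ≤ h0 ℓ := by
        have := mono_chain c (fun x => -(h0 x))
          (fun ℓ v hl hle => neg_le_neg (h0_anti ℓ v hl hle))
          (I' \ ∅).card ℓ ∅ I' rfl (Finset.empty_subset I') hℓ (husub I' hI'I)
        simp only [cubeE_empty, add_zero, neg_le_neg_iff] at this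
        exact this
      omega
    · obtain ⟨I', hI'I, hh, hh0⟩ :=
        exists_corner c h h0 h_stab h_cdp I.card ℓ I rfl hℓ hℓI
      calc h (ℓ + cubeE I) + h0 ℓ - h0 0
          = h (ℓ + cubeE I') + h0 (ℓ + cubeE I') - h0 0 := by rw [hh, hh0]
        _ ≤ _ := Finset.le_sup'
            (fun I' => h (ℓ + cubeE I') + h0 (ℓ + cubeE I') - h0 0)
            (Finset.mem_powerset.mpr hI'I)
  rw [hW]; ring
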